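/- Let S be a finite generating Vosper subset of an abelian group G with 0 ∈ S, and let X ⊆ G be a subset with |X| ≥ |S| and |X + S| = |X| + |S| − 1. Then for every y ∈ S, one has |X + (S \ {y})| ≥ |X| + |S| − 2. -/

import Mathlib

open Pointwise

/-- `S` is a Vosper subset of `G`: for every `X ⊆ G` with `|X| ≥ 2`,
`|X + S| ≥ min (|G| - 1) (|X| + |S|)`. -/
def IsVosper {G : Type*} [AddCommGroup G] (S : Set G) : Prop :=
  ∀ X : Set G, 2 ≤ X.encard →
    min ((Set.univ : Set G).encard - 1) (X.encard + S.encard) ≤ (X + S).encard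

/-- If `S` is a finite generating Vosper subset with `0 ∈ S`,
and `|X| ≥ |S|` with `|X + S| = |X| + |S| - 1`, then for every `y ∈ S`,
`|X + (S \ {y})| ≥ |X| + |S| - 2`. -/
theorem stmt_8 {G : Type*} [AddCommGroup G] (S : Set G) (hfin : S.Finite)
    (h0 : (0 : G) ∈ S) (hgen : AddSubgroup.closure S = ⊤) (hV : IsVosper S)
    (X : Set G) (hX : S.encard ≤ X.encard)
    (heq : (X + S).encard = X.encard + S.encard - 1) :
    ∀ y ∈ S, X.encard + S.encard - 2 ≤ (X + (S \ {y})).encard := by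
  intro y hy
  classical
  rcases subsingleton_or_nontrivial G with hGs | hGn
  · -- trivial group
    have hX1 : X.encard ≤ 1 := Set.encard_le_one_iff.2 fun a b _ _ => Subsingleton.elim a b
    have hS1 : S.encard ≤ 1 := Set.encard_le_one_iff.2 fun a b _ _ => Subsingleton.elim a b
    calc X.encard + S.encard - 2 ≤ 1 + 1 - 2 :=
          tsub_le_tsub_right (add_le_add hX1 hS1) 2
      _ = 0 := by norm_num
      _ ≤ _ := zero_le
  -- G nontrivial: S has a nonzero element
  obtain ⟨s₀, hs₀S, hs₀⟩ : ∃ s ∈ S, s ≠ 0 := by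
    by_contra h
    push_neg at h
    obtain ⟨g, hg⟩ := exists_ne (0 : G)
    have hsub : S ⊆ ({0} : Set G) := fun s hs => h s hs
    have h1 : g ∈ AddSubgroup.closure S := hgen ▸ AddSubgroup.mem_top g
    have h2 : g ∈ (⊥ : AddSubgroup G) := by
      rw [← AddSubgroup.closure_singleton_zero]
      exact AddSubgroup.closure_mono hsub h1
    exact hg (AddSubgroup.mem_bot.1 h2)
  set T : Set G := S \ {y} with hT
  obtain ⟨t₀, ht₀⟩ : T.Nonempty := by
    by_cases hy0 : y = 0
    · exact ⟨s₀, hs₀S, by simp [hy0, hs₀]⟩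
    · exact ⟨0, h0, by simp [Ne.symm hy0]⟩
  by_cases hXfin : X.Finite
  swap
  · -- X infinite
    have himg : (fun x => x + t₀) '' X ⊆ X + T := by
      rintro _ ⟨x, hx, rfl⟩; exact Set.add_mem_add hx ht₀
    have hinf : (X + T).Infinite :=
      Set.Infinite.mono himg (Set.Infinite.image ((add_left_injective t₀).injOn) hXfin)
    rw [hinf.encard_eq]; exact le_top
  -- X finite
  have enc : ∀ (A : Set G), A.Finite → A.encard = (A.ncard : ℕ∞) := fun A hA => by
    rw [Set.ncard_def, ENat.coe_toNat hA.encard_lt_top.ne]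
  have hS2 : 2 ≤ S.encard := by
    calc (2 : ℕ∞) = ({0, s₀} : Set G).encard := (Set.encard_pair (Ne.symm hs₀)).symm
      _ ≤ S.encard := Set.encard_le_encard (by rintro z (rfl | rfl) <;> assumption)
  have hX2 : 2 ≤ X.encard := le_trans hS2 hX
  have hXSfin : (X + S).Finite := by
    rw [← Set.encard_ne_top_iff, heq, enc X hXfin, enc S hfin]
    have : (X.ncard:ℕ∞) + S.ncard - 1 = ((X.ncard + S.ncard - 1 : ℕ) : ℕ∞) := by
      push_cast [ENat.coe_sub]; ring_nf
    rw [this]; exact ENat.coe_ne_top _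
  have hb2 : 2 ≤ S.ncard := by rw [enc S hfin] at hS2; exact_mod_cast hS2
  have ha2 : 2 ≤ X.ncard := by rw [enc X hXfin] at hX2; exact_mod_cast hX2
  -- G is finite
  have hGfin : Finite G := by
    have h1 := hV X hX2
    rw [min_le_iff] at h1
    rcases h1 with h1 | h1
    · rw [← Set.finite_univ_iff, ← Set.encard_ne_top_iff]
      intro htop
      rw [htop] at h1
      simp at h1
      exact Set.not_infinite.2 hXSfin h1
    · exfalso
      rw [heq, enc X hXfin, enc S hfin] at h1
      have : ((X.ncard + S.ncard : ℕ) : ℕ∞) ≤ ((X.ncard + S.ncard - 1 : ℕ) : ℕ∞) := by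
        push_cast [ENat.coe_sub]
        convert h1 using 2
      have := Nat.cast_le.mp this
      omega

  haveI := hGfin
  have hfinall : ∀ A : Set G, A.Finite := fun A => A.toFinite
  have hK : (X + S).ncard = X.ncard + S.ncard - 1 := by
    have h1 := heq
    rw [enc _ (hfinall (X + S)), enc X hXfin, enc S hfin] at h1
    have h2 : ((X + S).ncard : ℕ∞) = ((X.ncard + S.ncard - 1 : ℕ) : ℕ∞) := by
      rw [h1, ENat.coe_sub, Nat.cast_add, Nat.cast_one]
    exact_mod_cast h2
  have hba : S.ncard ≤ X.ncard := by
    rw [enc S hfin, enc X hXfin] at hX; exact_mod_cast hX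
  have hVn : ∀ A : Set G, 2 ≤ A.ncard →
      (Set.univ : Set G).ncard - 1 ≤ (A + S).ncard ∨ A.ncard + S.ncard ≤ (A + S).ncard := by
    intro A hA
    have h1 := hV A (by rw [enc A (hfinall A)]; exact_mod_cast hA)
    rw [min_le_iff] at h1
    rcases h1 with h1 | h1
    · left
      rw [enc _ (hfinall Set.univ), enc _ (hfinall (A + S))] at h1
      have h2 : (((Set.univ : Set G).ncard - 1 : ℕ) : ℕ∞) ≤ (((A + S).ncard : ℕ) : ℕ∞) := by
        rw [ENat.coe_sub, Nat.cast_one]; exact h1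
      exact_mod_cast h2
    · right
      rw [enc _ (hfinall A), enc S hfin, enc _ (hfinall (A + S))] at h1
      exact_mod_cast h1
  -- reduce the goal to a statement about natural numbers
  rw [enc X hXfin, enc S hfin, enc _ (hfinall (X + T))]
  suffices hnat : X.ncard + S.ncard - 2 ≤ (X + T).ncard by
    calc (↑X.ncard + ↑S.ncard - 2 : ℕ∞) = ((X.ncard + S.ncard - 2 : ℕ) : ℕ∞) := by
          rw [ENat.coe_sub, Nat.cast_add]; norm_num
      _ ≤ _ := Nat.cast_le.2 hnat
  by_contra hcon
  push_neg at hcon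
  set M : Set G := {x ∈ X | x + y ∉ X + T} with hM
  have hMX : M ⊆ X := fun x hx => hx.1
  have hma : M.ncard ≤ X.ncard := Set.ncard_le_ncard hMX (hfinall X)
  have hsubTS : X + T ⊆ X + S := Set.add_subset_add_left Set.diff_subset
  have hDM : (X + S) \ (X + T) = (fun x => x + y) '' M := by
    ext z
    constructor
    · rintro ⟨hz1, hz2⟩
      rw [Set.mem_add] at hz1
      obtain ⟨x, hx, s, hs, rfl⟩ := hz1
      by_cases hsT : s ∈ T
      · exact absurd (Set.add_mem_add hx hsT) hz2
      · have hsy : s = y := by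
          by_contra hne
          exact hsT ⟨hs, hne⟩
        subst hsy
        exact ⟨x, ⟨hx, hz2⟩, rfl⟩
    · rintro ⟨x, ⟨hx, hxy⟩, rfl⟩
      exact ⟨Set.add_mem_add hx hy, hxy⟩
  have hDcard : ((X + S) \ (X + T)).ncard = M.ncard := by
    rw [hDM]; exact Set.ncard_image_of_injective _ (add_left_injective y)
  have hkK : (X + T).ncard ≤ (X + S).ncard := Set.ncard_le_ncard hsubTS (hfinall _)
  have hkm : (X + T).ncard + M.ncard = X.ncard + S.ncard - 1 := by
    have h1 := Set.ncard_diff hsubTS (hfinall _)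
    rw [hDcard, hK] at h1
    omega
  have hka : X.ncard ≤ (X + T).ncard := by
    have himg : (fun x => x + t₀) '' X ⊆ X + T := by
      rintro _ ⟨x, hx, rfl⟩; exact Set.add_mem_add hx ht₀
    have h1 := Set.ncard_le_ncard himg (hfinall _)
    rwa [Set.ncard_image_of_injective _ (add_left_injective t₀)] at h1
  have hnK : X.ncard + S.ncard - 1 ≤ (Set.univ : Set G).ncard := by
    rw [← hK]; exact Set.ncard_le_ncard (Set.subset_univ _) (hfinall _)
  have hXM : (X \ M).ncard = X.ncard - M.ncard := Set.ncard_diff hMX (hfinall _)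
  have hXMS : (X \ M) + S ⊆ X + T := by
    intro z hz
    rw [Set.mem_add] at hz
    obtain ⟨x, hx, s, hs, rfl⟩ := hz
    by_cases hsT : s ∈ T
    · exact Set.add_mem_add hx.1 hsT
    · have hsy : s = y := by by_contra hne; exact hsT ⟨hs, hne⟩
      subst hsy
      by_contra hmem
      exact hx.2 ⟨hx.1, hmem⟩
  rcases Nat.lt_or_ge (X \ M).ncard 2 with hc2 | hc2
  · rcases Nat.eq_zero_or_pos (X \ M).ncard with hc0 | hc1
    · omega
    · -- (X \ M).ncard = 1 : the hard case
      have hc1' : (X \ M).ncard = 1 := by omega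
      obtain ⟨c, hc⟩ := Set.ncard_eq_one.mp hc1'
      have hcX : c ∈ X \ M := by rw [hc]; exact Set.mem_singleton c
      have hMne : M.Nonempty := Set.nonempty_of_ncard_ne_zero (by omega)
      obtain ⟨a₀, ha₀⟩ := hMne
      have hca : c ≠ a₀ := fun h => hcX.2 (h ▸ ha₀)
      have hpair : ({c, a₀} : Set G).ncard = 2 := Set.ncard_pair hca
      have hsub2 : ({c, a₀} : Set G) + S ⊆ (X + T) ∪ {a₀ + y} := by
        intro z hz
        rw [Set.mem_add] at hz
        obtain ⟨x, hx, s, hs, rfl⟩ := hz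
        simp only [Set.mem_insert_iff, Set.mem_singleton_iff] at hx
        rcases hx with rfl | rfl
        · left
          exact hXMS (Set.add_mem_add hcX hs)
        · by_cases hsT : s ∈ T
          · left; exact Set.add_mem_add (hMX ha₀) hsT
          · have hsy : s = y := by by_contra hne; exact hsT ⟨hs, hne⟩
            right; simp [hsy]
      have hcard2 : (({c, a₀} : Set G) + S).ncard ≤ (X + T).ncard + 1 := by
        refine le_trans (Set.ncard_le_ncard hsub2 (hfinall _)) ?_
        refine le_trans (Set.ncard_union_le _ _) ?_
        simp
      have h1 := hVn ({c, a₀} : Set G) (le_of_eq hpair.symm)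
      rw [hpair] at h1
      have hnums : (Set.univ : Set G).ncard = 5 ∧ X.ncard = 3 ∧ S.ncard = 3 ∧
          (X + T).ncard = 3 := by
        rcases h1 with h1 | h1 <;> omega
      obtain ⟨hn5, ha3, hb3, hk3⟩ := hnums
      have hTcard : T.ncard = 2 := by
        rw [hT, Set.ncard_diff_singleton_of_mem hy, hb3]
      obtain ⟨t₁, t₂, ht12, hTeq⟩ := Set.ncard_eq_two.mp hTcard
      have himgXT : ∀ t ∈ T, (fun x => x + t) '' X = X + T := by
        intro t ht
        have hsubi : (fun x => x + t) '' X ⊆ X + T := by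
          rintro _ ⟨x, hx, rfl⟩; exact Set.add_mem_add hx ht
        refine Set.eq_of_subset_of_ncard_le hsubi ?_ (hfinall _)
        rw [Set.ncard_image_of_injective _ (add_left_injective t)]
        omega
      have hdne : t₁ - t₂ ≠ 0 := sub_ne_zero.mpr ht12
      have hstep : ∀ x ∈ X, x + (t₁ - t₂) ∈ X := by
        intro x hx
        have ht₁T : t₁ ∈ T := by rw [hTeq]; exact Set.mem_insert _ _
        have ht₂T : t₂ ∈ T := by rw [hTeq]; exact Set.mem_insert_of_mem _ rfl
        have h1 : x + t₁ ∈ X + T := Set.add_mem_add hx ht₁T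
        rw [← himgXT t₂ ht₂T] at h1
        obtain ⟨x', hx', hx'e⟩ := h1
        simp only at hx'e
        have hxd : x + (t₁ - t₂) = x' := by
          have h2 : x + t₁ - t₂ = x' := by rw [← hx'e]; abel
          rw [← h2]; abel
        rw [hxd]; exact hx'
      obtain ⟨x₀, hx₀⟩ : X.Nonempty := Set.nonempty_of_ncard_ne_zero (by omega)
      have horb : ∀ j : ℕ, x₀ + j • (t₁ - t₂) ∈ X := by
        intro j
        induction j with
        | zero => simpa using hx₀
        | succ j ih =>
          have h2 : x₀ + (j + 1) • (t₁ - t₂) = (x₀ + j • (t₁ - t₂)) + (t₁ - t₂) := by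
            rw [succ_nsmul, ← add_assoc]
          rw [h2]; exact hstep _ ih
      have hord : addOrderOf (t₁ - t₂) = 5 := by
        have hcardG : Nat.card G = 5 := by rw [← Set.ncard_univ]; exact hn5
        have hdvd : addOrderOf (t₁ - t₂) ∣ 5 := hcardG ▸ addOrderOf_dvd_natCard _
        have hne1 : addOrderOf (t₁ - t₂) ≠ 1 := by
          simpa [AddMonoid.addOrderOf_eq_one_iff] using hdne
        rcases (Nat.prime_five).eq_one_or_self_of_dvd _ hdvd with h | h
        · exact absurd h hne1
        · exact h
      have hdvd5 : ∀ i j : ℕ, i ≤ j → x₀ + i • (t₁ - t₂) = x₀ + j • (t₁ - t₂) →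
          5 ∣ j - i := by
        intro i j hij he
        have h3 : i • (t₁ - t₂) = j • (t₁ - t₂) := add_left_cancel he
        have h4 : i • (t₁ - t₂) + (j - i) • (t₁ - t₂) = i • (t₁ - t₂) + 0 := by
          rw [add_zero, ← add_nsmul, Nat.add_sub_cancel' hij, h3]
        have h5 : (j - i) • (t₁ - t₂) = 0 := add_left_cancel h4
        have h6 := addOrderOf_dvd_iff_nsmul_eq_zero.mpr h5
        rwa [hord] at h6
      have h5a : 5 ≤ X.ncard := by
        have hsub5 : ↑((Finset.range 5).image (fun j => x₀ + j • (t₁ - t₂))) ⊆ X := by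
          intro z hz
          simp only [Finset.coe_image, Finset.coe_range, Set.mem_image, Set.mem_Iio] at hz
          obtain ⟨j, _, rfl⟩ := hz
          exact horb j
        have hcard5 : ((Finset.range 5).image (fun j => x₀ + j • (t₁ - t₂))).card = 5 := by
          rw [Finset.card_image_of_injOn, Finset.card_range]
          intro i hi j hj he
          simp only [Finset.coe_range, Set.mem_Iio] at hi hj
          rcases le_total i j with h | h
          · have := hdvd5 i j h he
            omega
          · have := hdvd5 j i h he.symm
            omega
        have h7 := Set.ncard_le_ncard hsub5 (hfinall X)
        rwa [Set.ncard_coe_finset, hcard5] at h7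
      omega
  · have h1 := hVn (X \ M) hc2
    have h2 : ((X \ M) + S).ncard ≤ (X + T).ncard := Set.ncard_le_ncard hXMS (hfinall _)
    rw [hXM] at h1
    rcases h1 with h1 | h1 <;> omega
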